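/- arXiv:1203.4688 — 2 statements merged into one kernel-verified Lean document; each statement's English description precedes it below -/
import Mathlib

section
/- Let U, V be m-dimensional subspaces of R^n and let (e_1,...,e_m) be an orthonormal basis of V such that dist(e_i, U) = |Q_U(e_i)| ≤ ϑ for all i, where ϑ ∈ (0, 1/√2). Then ‖π_U − π_V‖ ≤ C₃ϑ for a constant C₃ depending only on m. -/
open MeasureTheory Metric Set
open scoped ENNReal
open scoped RealInnerProductSpace

noncomputable section

abbrev E (n : ℕ) := EuclideanSpace ℝ (Fin n)

/-- The orthogonal projection of ℝⁿ onto a linear subspace `U`, as a map ℝⁿ → ℝⁿ. -/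
noncomputable def proj {n : ℕ} (U : Submodule ℝ (E n)) : E n →L[ℝ] E n :=
  U.subtypeL.comp (Submodule.orthogonalProjection U)

lemma proj_apply {n : ℕ} (U : Submodule ℝ (E n)) (x : E n) :
    proj U x = (Submodule.orthogonalProjection U x : E n) := rfl

lemma proj_mem {n : ℕ} (U : Submodule ℝ (E n)) (x : E n) : proj U x ∈ U :=
  (Submodule.orthogonalProjection U x).2

lemma proj_eq_self {n : ℕ} {U : Submodule ℝ (E n)} {x : E n} (hx : x ∈ U) : proj U x = x := by
  exact (Submodule.starProjection_eq_self_iff (K := U)).mpr hx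

lemma proj_idem {n : ℕ} (U : Submodule ℝ (E n)) (x : E n) : proj U (proj U x) = proj U x :=
  proj_eq_self (proj_mem U x)

lemma proj_inner_symm {n : ℕ} (U : Submodule ℝ (E n)) (x y : E n) :
    ⟪proj U x, y⟫ = ⟪x, proj U y⟫ := by
  exact Submodule.inner_starProjection_left_eq_right U x y

lemma pyth {n : ℕ} (U : Submodule ℝ (E n)) (x : E n) :
    ‖x‖ ^ 2 = ‖proj U x‖ ^ 2 + ‖x - proj U x‖ ^ 2 := by
  have h := Submodule.norm_sq_eq_add_norm_sq_projection x U
  have e1 : proj U x = U.starProjection x := rfl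
  rw [e1, ← Submodule.starProjection_orthogonal_val (K := U)]
  exact h

lemma proj_norm_le {n : ℕ} (U : Submodule ℝ (E n)) (x : E n) : ‖proj U x‖ ≤ ‖x‖ := by
  have h := pyth U x
  nlinarith [norm_nonneg (x - proj U x), norm_nonneg (proj U x), norm_nonneg x]

lemma sub_proj_norm_le {n : ℕ} (U : Submodule ℝ (E n)) (x : E n) : ‖x - proj U x‖ ≤ ‖x‖ := by
  have h := pyth U x
  nlinarith [norm_nonneg (x - proj U x), norm_nonneg (proj U x), norm_nonneg x]

/-- Lemma A : the bound on `V` coming from the orthonormal basis. -/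
lemma lemA {n m : ℕ} {U V : Submodule ℝ (E n)} {e : Fin m → E n}
    (he : Orthonormal ℝ e) (hspan : Submodule.span ℝ (Set.range e) = V)
    {ϑ : ℝ} (hϑ0 : 0 ≤ ϑ) (hd : ∀ i, ‖e i - proj U (e i)‖ ≤ ϑ) :
    ∀ v ∈ V, ‖v - proj U v‖ ≤ Real.sqrt m * ϑ * ‖v‖ := by
  intro v hv
  rw [← hspan] at hv
  obtain ⟨c, rfl⟩ := (Submodule.mem_span_range_iff_exists_fun ℝ).mp hv
  set v := ∑ i, c i • e i with hvdef
  have hnorm : ‖v‖ ^ 2 = ∑ i, (c i) ^ 2 := by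
    have : ⟪v, v⟫ = ∑ i, (c i) ^ 2 := by
      rw [hvdef, sum_inner]
      refine Finset.sum_congr rfl fun i _ => ?_
      rw [real_inner_smul_left, he.inner_right_fintype]
      ring
    rw [← real_inner_self_eq_norm_sq, this]
  have hlin : v - proj U v = ∑ i, c i • (e i - proj U (e i)) := by
    simp only [map_sum, ContinuousLinearMap.map_smul, Finset.sum_sub_distrib, smul_sub, hvdef]
  have h1 : ‖v - proj U v‖ ≤ ∑ i, |c i| * ϑ := by
    rw [hlin]
    refine (norm_sum_le _ _).trans (Finset.sum_le_sum fun i _ => ?_)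
    rw [norm_smul, Real.norm_eq_abs]
    exact mul_le_mul_of_nonneg_left (hd i) (abs_nonneg _)
  have h2 : (∑ i, |c i|) ^ 2 ≤ (m : ℝ) * ∑ i, (c i) ^ 2 := by
    have := sq_sum_le_card_mul_sum_sq (s := (Finset.univ : Finset (Fin m)))
      (f := fun i => |c i|)
    simpa [sq_abs] using this
  have h3 : ∑ i, |c i| ≤ Real.sqrt m * ‖v‖ := by
    have hs : (∑ i, |c i|) ≤ Real.sqrt ((m : ℝ) * ∑ i, (c i) ^ 2) := by
      rw [← Real.sqrt_sq (Finset.sum_nonneg fun i _ => abs_nonneg (c i))]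
      exact Real.sqrt_le_sqrt h2
    calc (∑ i, |c i|) ≤ Real.sqrt ((m : ℝ) * ∑ i, (c i) ^ 2) := hs
      _ = Real.sqrt m * Real.sqrt (∑ i, (c i) ^ 2) := Real.sqrt_mul (by positivity) _
      _ = Real.sqrt m * ‖v‖ := by
          rw [← hnorm, Real.sqrt_sq (norm_nonneg v)]
  calc ‖v - proj U v‖ ≤ ∑ i, |c i| * ϑ := h1
    _ = (∑ i, |c i|) * ϑ := by rw [← Finset.sum_mul]
    _ ≤ (Real.sqrt m * ‖v‖) * ϑ := mul_le_mul_of_nonneg_right h3 hϑ0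
    _ = Real.sqrt m * ϑ * ‖v‖ := by ring

lemma le_of_sq_le_sq' {a b : ℝ} (ha : 0 ≤ a) (hb : 0 ≤ b) (h : a ^ 2 ≤ b ^ 2) : a ≤ b := by
  nlinarith

/-- Lemma B : transfer the bound from `V` to `U` using equal dimensions and adjoints. -/
lemma lemB {n : ℕ} {U V : Submodule ℝ (E n)}
    (hrank : Module.finrank ℝ U = Module.finrank ℝ V)
    {α : ℝ} (hα0 : 0 ≤ α) (hα1 : α < 1)
    (hA : ∀ v ∈ V, ‖v - proj U v‖ ≤ α * ‖v‖) :
    ∀ u ∈ U, ‖u - proj V u‖ ≤ α * ‖u‖ := by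
  set β := Real.sqrt (1 - α ^ 2) with hβ
  have h1α : 0 < 1 - α ^ 2 := by nlinarith
  have hβpos : 0 < β := Real.sqrt_pos.mpr h1α
  have hβsq : β ^ 2 = 1 - α ^ 2 := Real.sq_sqrt h1α.le
  have hlow : ∀ v ∈ V, β * ‖v‖ ≤ ‖proj U v‖ := by
    intro v hv
    have h1 := pyth U v
    have h2 := hA v hv
    refine le_of_sq_le_sq' (by positivity) (norm_nonneg _) ?_
    have h4 : ‖v - proj U v‖ ^ 2 ≤ α ^ 2 * ‖v‖ ^ 2 := by
      have := pow_le_pow_left₀ (norm_nonneg (v - proj U v)) h2 2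
      calc ‖v - proj U v‖ ^ 2 ≤ (α * ‖v‖) ^ 2 := this
        _ = α ^ 2 * ‖v‖ ^ 2 := by ring
    nlinarith [norm_nonneg v]
  set T : V →L[ℝ] U := (Submodule.orthogonalProjection U).comp V.subtypeL with hTdef
  have hT : ∀ v : V, ‖T v‖ = ‖proj U (v : E n)‖ := fun v => rfl
  have hinj : Function.Injective T := by
    intro v w h
    have h0 : T (v - w) = 0 := by rw [map_sub, h, sub_self]
    have h2 := hlow ((v - w : V) : E n) (v - w).2
    have h3 : ‖proj U ((v - w : V) : E n)‖ = 0 := by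
      rw [← hT, h0, norm_zero]
    have h4 : ‖((v - w : V) : E n)‖ ≤ 0 := by
      have h1 : β * ‖((v - w : V) : E n)‖ ≤ β * 0 := by rw [mul_zero]; linarith
      exact (mul_le_mul_iff_right₀ hβpos).mp h1
    have h5 : ((v - w : V) : E n) = 0 := norm_le_zero_iff.mp h4
    have h6 : (v - w : V) = 0 := by exact_mod_cast h5
    exact sub_eq_zero.mp h6
  have hsurj : Function.Surjective T := by
    have := (LinearMap.injective_iff_surjective_of_finrank_eq_finrank
      (f := (T : ↥V →ₗ[ℝ] ↥U)) hrank.symm).mp hinj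
    exact this
  set P : U →L[ℝ] V := (Submodule.orthogonalProjection V).comp U.subtypeL with hPdef
  have hPkey : ∀ (u : U) (v : V), ⟪P u, v⟫ = ⟪u, T v⟫ := by
    intro u v
    have h1 : (⟪P u, v⟫ : ℝ) = ⟪proj V (u : E n), (v : E n)⟫ := by
      rw [Submodule.coe_inner]; rfl
    have h2 : (⟪u, T v⟫ : ℝ) = ⟪(u : E n), proj U (v : E n)⟫ := by
      rw [Submodule.coe_inner]; rfl
    rw [h1, h2, proj_inner_symm, proj_eq_self v.2, ← proj_inner_symm, proj_eq_self u.2]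
  have hP : ∀ u : U, ‖P u‖ = ‖proj V (u : E n)‖ := fun u => rfl
  have hAlow : ∀ u : U, β * ‖u‖ ≤ ‖P u‖ := by
    intro u
    rcases hsurj u with ⟨v, hv⟩
    have h1 : ⟪P u, v⟫ = ‖u‖ ^ 2 := by
      rw [hPkey, hv, real_inner_self_eq_norm_sq]
    have h2 : ‖u‖ ^ 2 ≤ ‖P u‖ * ‖v‖ := by
      rw [← h1]; exact real_inner_le_norm _ _
    have h3 : β * ‖v‖ ≤ ‖u‖ := by
      have := hlow ((v : E n)) v.2
      rw [← hT v, hv] at this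
      exact this
    rcases eq_or_lt_of_le (norm_nonneg u) with h | h
    · rw [← h, mul_zero]; exact norm_nonneg _
    · have h5 : (β * ‖u‖) * ‖u‖ ≤ ‖P u‖ * ‖u‖ := by
        calc (β * ‖u‖) * ‖u‖ = β * ‖u‖ ^ 2 := by ring
          _ ≤ β * (‖P u‖ * ‖v‖) := mul_le_mul_of_nonneg_left h2 hβpos.le
          _ = ‖P u‖ * (β * ‖v‖) := by ring
          _ ≤ ‖P u‖ * ‖u‖ := mul_le_mul_of_nonneg_left h3 (norm_nonneg _)
      exact le_of_mul_le_mul_right h5 h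
  intro u hu
  have hlow2 : β * ‖u‖ ≤ ‖proj V u‖ := by
    have h0 := hAlow ⟨u, hu⟩
    rw [hP ⟨u, hu⟩] at h0
    exact h0
  clear_value T P
  clear hPkey hP hAlow hT hinj hsurj hlow hA hPdef hTdef T P
  have h1 := pyth V u
  refine le_of_sq_le_sq' (norm_nonneg _) (by positivity) ?_
  have h2 : β ^ 2 * ‖u‖ ^ 2 ≤ ‖proj V u‖ ^ 2 := by
    have h3 := mul_le_mul hlow2 hlow2 (by positivity) (norm_nonneg _)
    nlinarith [h3]
  calc ‖u - proj V u‖ ^ 2 = ‖u‖ ^ 2 - ‖proj V u‖ ^ 2 := by linarith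
    _ ≤ ‖u‖ ^ 2 - β ^ 2 * ‖u‖ ^ 2 := by linarith
    _ = α ^ 2 * ‖u‖ ^ 2 := by rw [hβsq]; ring
    _ = (α * ‖u‖) ^ 2 := by ring

lemma lemC {n : ℕ} {U V : Submodule ℝ (E n)} {α : ℝ} (hα0 : 0 ≤ α)
    (hB : ∀ u ∈ U, ‖u - proj V u‖ ≤ α * ‖u‖) :
    ∀ w : E n, w ∈ Vᗮ → ‖proj U w‖ ≤ α * ‖w‖ := by
  intro w hw
  have ha : ⟪w, proj U w⟫ = ‖proj U w‖ ^ 2 := by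
    have h := proj_inner_symm U w (proj U w)
    rw [proj_idem] at h
    rw [← h, real_inner_self_eq_norm_sq]
  have hb : ⟪w, proj V (proj U w)⟫ = 0 := by
    have := (Submodule.mem_orthogonal V w).mp hw (proj V (proj U w)) (proj_mem _ _)
    rwa [real_inner_comm]
  have key : ‖proj U w‖ ^ 2 ≤ ‖w‖ * (α * ‖proj U w‖) := by
    calc ‖proj U w‖ ^ 2 = ⟪w, proj U w⟫ - ⟪w, proj V (proj U w)⟫ := by rw [ha, hb, sub_zero]
      _ = ⟪w, proj U w - proj V (proj U w)⟫ := (inner_sub_right _ _ _).symm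
      _ ≤ ‖w‖ * ‖proj U w - proj V (proj U w)‖ := real_inner_le_norm _ _
      _ ≤ ‖w‖ * (α * ‖proj U w‖) :=
          mul_le_mul_of_nonneg_left (hB _ (proj_mem U w)) (norm_nonneg w)
  rcases eq_or_lt_of_le (norm_nonneg (proj U w)) with h | h
  · rw [← h]; positivity
  · have : ‖proj U w‖ * ‖proj U w‖ ≤ (α * ‖w‖) * ‖proj U w‖ := by
      calc ‖proj U w‖ * ‖proj U w‖ = ‖proj U w‖ ^ 2 := by ring
        _ ≤ ‖w‖ * (α * ‖proj U w‖) := key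
        _ = (α * ‖w‖) * ‖proj U w‖ := by ring
    exact le_of_mul_le_mul_right this h

/-- For every `m` there is a constant `C₃ = C₃(m)` with the following property: if `U`, `V`
are `m`-dimensional subspaces of ℝⁿ and `(e_1,…,e_m)` is an orthonormal basis of `V` with
`dist(e i, U) = ‖e i − π_U (e i)‖ ≤ ϑ` for all `i`, where `ϑ ∈ (0, 1/√2)`,
then `‖π_U − π_V‖ ≤ C₃ ϑ`. -/
theorem grassmann_dist_ang (m : ℕ) :
    ∃ C₃ : ℝ, 0 < C₃ ∧
      ∀ (n : ℕ) (ϑ : ℝ), ϑ ∈ Set.Ioo (0:ℝ) (1 / Real.sqrt 2) →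
        ∀ (U V : Submodule ℝ (E n)) (e : Fin m → E n),
          Module.finrank ℝ U = m →
          Orthonormal ℝ e →
          Submodule.span ℝ (Set.range e) = V →
          (∀ i, ‖e i - proj U (e i)‖ ≤ ϑ) →
          ‖proj U - proj V‖ ≤ C₃ * ϑ := by
  refine ⟨2 * Real.sqrt m + 1, by positivity, ?_⟩
  intro n ϑ hϑ U V e hU he hspan hd
  obtain ⟨hϑ0, hϑhalf⟩ := hϑ
  set α := Real.sqrt m * ϑ with hαdef
  have hα0 : 0 ≤ α := by positivity
  have hA : ∀ v ∈ V, ‖v - proj U v‖ ≤ α * ‖v‖ := by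
    intro v hv
    simpa [hαdef] using lemA he hspan hϑ0.le hd v hv
  have hbound : ∀ x : E n, ‖(proj U - proj V) x‖ ≤ (2 * Real.sqrt m + 1) * ϑ * ‖x‖ := by
    intro x
    have h2a : 2 * α * ‖x‖ ≤ (2 * Real.sqrt m + 1) * ϑ * ‖x‖ := by
      have : 2 * α ≤ (2 * Real.sqrt m + 1) * ϑ := by
        rw [hαdef]; nlinarith [hϑ0.le]
      exact mul_le_mul_of_nonneg_right this (norm_nonneg x)
    by_cases hcase : α < 1
    · have hrank : Module.finrank ℝ U = Module.finrank ℝ V := by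
        rw [hU, ← hspan, finrank_span_eq_card he.linearIndependent, Fintype.card_fin]
      have hB := lemB hrank hα0 hcase hA
      have hC := lemC hα0 hB
      have hid : (proj U - proj V) x
          = proj U (x - proj V x) - (proj V x - proj U (proj V x)) := by
        simp only [ContinuousLinearMap.sub_apply, map_sub]
        abel
      have hw : x - proj V x ∈ Vᗮ := by
        exact Submodule.sub_starProjection_mem_orthogonal (K := V) x
      have t1 : ‖proj U (x - proj V x)‖ ≤ α * ‖x‖ :=
        (hC _ hw).trans (mul_le_mul_of_nonneg_left (sub_proj_norm_le V x) hα0)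
      have t2 : ‖proj V x - proj U (proj V x)‖ ≤ α * ‖x‖ :=
        (hA _ (proj_mem V x)).trans (mul_le_mul_of_nonneg_left (proj_norm_le V x) hα0)
      calc ‖(proj U - proj V) x‖
          ≤ ‖proj U (x - proj V x)‖ + ‖proj V x - proj U (proj V x)‖ := by
            rw [hid]; exact norm_sub_le _ _
        _ ≤ α * ‖x‖ + α * ‖x‖ := add_le_add t1 t2
        _ = 2 * α * ‖x‖ := by ring
        _ ≤ (2 * Real.sqrt m + 1) * ϑ * ‖x‖ := h2a
    · have h1 : (1:ℝ) ≤ α := not_lt.mp hcase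
      calc ‖(proj U - proj V) x‖ = ‖proj U x - proj V x‖ := by
            rw [ContinuousLinearMap.sub_apply]
        _ ≤ ‖proj U x‖ + ‖proj V x‖ := norm_sub_le _ _
        _ ≤ ‖x‖ + ‖x‖ := add_le_add (proj_norm_le U x) (proj_norm_le V x)
        _ = 2 * ‖x‖ := by ring
        _ ≤ 2 * α * ‖x‖ := by nlinarith [norm_nonneg x]
        _ ≤ (2 * Real.sqrt m + 1) * ϑ * ‖x‖ := h2a
  exact ContinuousLinearMap.opNorm_le_bound _ (by positivity) hbound

end
end

section
/- Let Σ ⊂ R^n be a set, x ∈ Σ, r ∈ (0, diam Σ], and H : Σ → G(n,m) a map. Then for every z ∈ Σ ∩ B(x, β r/2), where β = β_Σ(x,r) ≤ 1, the tangent-point curvature satisfies K_tp(z) := sup_{y∈Σ} 2 dist(y, z + H(z))/|y−z|² ≥ (4/9) β_Σ(x,r)/r. -/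
open MeasureTheory Metric Set
open scoped ENNReal

noncomputable section

/-- The beta number `β_A(x,r)` with respect to `m`-planes. -/
noncomputable def betaNum {n : ℕ} (m : ℕ) (A : Set (E n)) (x : E n) (r : ℝ) : ℝ :=
  r⁻¹ * ⨅ H : {H : Submodule ℝ (E n) // Module.finrank ℝ H = m},
      ⨆ z ∈ A ∩ Metric.ball x r, Metric.infDist z ((fun v => x + v) '' (H.1 : Set (E n)))

/-- The global tangent-point curvature of `A` at `z` with respect to the plane field `H`:
`K_tp(z) = sup_{y ∈ A} 2 dist(y, z + H z)/|y−z|²`. -/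
noncomputable def Ktp {n : ℕ} (H : E n → Submodule ℝ (E n)) (A : Set (E n)) (z : E n) : ℝ≥0∞ :=
  ⨆ y ∈ A, ENNReal.ofReal
    (2 * Metric.infDist y ((fun v => z + v) '' ((H z) : Set (E n))) / ‖y - z‖ ^ 2)

set_option maxHeartbeats 1000000 in
/-- Tangent-point curvature is large near a point where the beta number is large:
for `A ⊂ ℝⁿ`, `x ∈ A`, `r ∈ (0, diam A]` and any plane field `H : A → G(n,m)`, every
`z ∈ A ∩ B(x, βr/2)`, where `β = β_A(x,r) ≤ 1`, satisfies
`K_tp(z) ≥ (4/9) β_A(x,r)/r`. -/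
theorem tangent_point_curvature_ge_beta (n m : ℕ) (hmn : m ≤ n)
    (A : Set (E n)) (H : E n → Submodule ℝ (E n))
    (hH : ∀ z ∈ A, Module.finrank ℝ (H z) = m)
    (x : E n) (hx : x ∈ A) (r : ℝ) (hr : 0 < r) (hrd : r ≤ Metric.diam A)
    (hβ : betaNum m A x r ≤ 1) :
    ∀ z ∈ A ∩ Metric.ball x (betaNum m A x r * r / 2),
      ENNReal.ofReal (4 / 9 * betaNum m A x r / r) ≤ Ktp H A z := by
  intro z hz
  obtain ⟨hzA, hzball⟩ := hz
  set β := betaNum m A x r with hβdef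
  rcases le_or_gt β 0 with hβ0 | hβ0
  · have hle : (4 : ℝ) / 9 * β / r ≤ 0 :=
      div_nonpos_of_nonpos_of_nonneg (by nlinarith) hr.le
    rw [ENNReal.ofReal_eq_zero.2 hle]
    exact zero_le
  · set V : Set (E n) := ((H z : Submodule ℝ (E n)) : Set (E n)) with hVdef
    have h0V : (0 : E n) ∈ V := Submodule.zero_mem _
    have hzx : dist z x < β * r / 2 := mem_ball.mp hzball
    -- each inner sup is bounded by r
    have hball : ∀ (W : Submodule ℝ (E n)) (w : E n),
        (⨆ _ : w ∈ A ∩ Metric.ball x r,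
          Metric.infDist w ((fun v => x + v) '' (W : Set (E n)))) ≤ r := by
      intro W w
      by_cases hw : w ∈ A ∩ Metric.ball x r
      · rw [ciSup_pos hw]
        have hxmem : x ∈ (fun v => x + v) '' (W : Set (E n)) :=
          ⟨0, Submodule.zero_mem _, by simp⟩
        exact le_trans (Metric.infDist_le_dist_of_mem hxmem) (mem_ball.mp hw.2).le
      · haveI : IsEmpty (w ∈ A ∩ Metric.ball x r) := ⟨hw⟩
        rw [Real.iSup_of_isEmpty]
        exact hr.le
    have hb : ∀ (W : Submodule ℝ (E n)), BddAbove (Set.range fun w =>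
        ⨆ _ : w ∈ A ∩ Metric.ball x r,
          Metric.infDist w ((fun v => x + v) '' (W : Set (E n)))) := by
      intro W
      exact ⟨r, by rintro _ ⟨w, rfl⟩; exact hball W w⟩
    have hnonneg : ∀ (W : Submodule ℝ (E n)),
        0 ≤ ⨆ w ∈ A ∩ Metric.ball x r,
          Metric.infDist w ((fun v => x + v) '' (W : Set (E n))) := by
      intro W
      have hxmem : x ∈ A ∩ Metric.ball x r := ⟨hx, mem_ball_self hr⟩
      have h1 := le_ciSup (hb W) x
      rw [ciSup_pos hxmem] at h1
      exact le_trans Metric.infDist_nonneg h1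
    -- the infimum is at most the value at H z
    have hfin : Module.finrank ℝ (H z) = m := hH z hzA
    have hI : (⨅ W : {W : Submodule ℝ (E n) // Module.finrank ℝ W = m},
          ⨆ w ∈ A ∩ Metric.ball x r,
            Metric.infDist w ((fun v => x + v) '' (W.1 : Set (E n))))
        ≤ ⨆ w ∈ A ∩ Metric.ball x r,
            Metric.infDist w ((fun v => x + v) '' ((H z : Submodule ℝ (E n)) : Set (E n))) := by
      have h1 := ciInf_le (f := fun W : {W : Submodule ℝ (E n) // Module.finrank ℝ W = m} =>
          ⨆ w ∈ A ∩ Metric.ball x r,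
            Metric.infDist w ((fun v => x + v) '' (W.1 : Set (E n))))
        ⟨0, by rintro _ ⟨W, rfl⟩; exact hnonneg W.1⟩ ⟨H z, hfin⟩
      exact h1
    have hS : β * r ≤ ⨆ w ∈ A ∩ Metric.ball x r,
        Metric.infDist w ((fun v => x + v) '' V) := by
      rw [hVdef]
      have hβr : β * r = ⨅ W : {W : Submodule ℝ (E n) // Module.finrank ℝ W = m},
          ⨆ w ∈ A ∩ Metric.ball x r,
            Metric.infDist w ((fun v => x + v) '' (W.1 : Set (E n))) := by
        rw [hβdef, betaNum]
        field_simp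
      rw [hβr]
      exact hI
    -- main estimate
    refine le_of_forall_lt fun c hc => ?_
    have hc_top : c ≠ ⊤ := (hc.trans_le le_top).ne
    set t := c.toReal with htdef
    have ht0 : 0 ≤ t := ENNReal.toReal_nonneg
    set T : ℝ := 4 / 9 * β / r with hTdef
    have hT : 0 < T := by positivity
    have ht : t < T := by
      have h1 := (ENNReal.toReal_lt_toReal hc_top ENNReal.ofReal_ne_top).2 hc
      rwa [ENNReal.toReal_ofReal hT.le] at h1
    have hTrr : T * r ^ 2 = 4 / 9 * (β * r) := by
      rw [hTdef]; field_simp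
    set ε : ℝ := min (β * r / 4) (9 * r ^ 2 * (T - t) / 16) with hεdef
    have hε0 : 0 < ε := lt_min (by positivity)
      (div_pos (mul_pos (by positivity) (sub_pos.2 ht)) (by norm_num))
    have hε1 : ε ≤ β * r / 4 := min_le_left _ _
    have hε2 : ε ≤ 9 * r ^ 2 * (T - t) / 16 := min_le_right _ _
    -- find a far point y
    obtain ⟨y, hy, hylt⟩ : ∃ y ∈ A ∩ Metric.ball x r,
        β * r - ε < Metric.infDist y ((fun v => x + v) '' V) := by
      by_contra hcon
      push_neg at hcon
      have hge0 : (0 : ℝ) ≤ β * r - ε := by nlinarith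
      have hle : (⨆ w ∈ A ∩ Metric.ball x r,
          Metric.infDist w ((fun v => x + v) '' V)) ≤ β * r - ε :=
        Real.iSup_le (fun w => Real.iSup_le (fun hw => hcon w hw) hge0) hge0
      linarith [hS]
    obtain ⟨hyA, hyball⟩ := hy
    have hyx : dist y x < r := mem_ball.mp hyball
    -- translate the affine planes
    have htrans : Metric.infDist y ((fun v => x + v) '' V) = Metric.infDist (y - x) V := by
      have hiso : Isometry (fun v : E n => x + v) :=
        Isometry.of_dist_eq fun p q => dist_add_left x p q
      have hy' : y = (fun v : E n => x + v) (y - x) := by simp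
      rw [hy', Metric.infDist_image hiso]
      simp
    have htrans' : Metric.infDist y ((fun v => z + v) '' V) = Metric.infDist (y - z) V := by
      have hiso : Isometry (fun v : E n => z + v) :=
        Isometry.of_dist_eq fun p q => dist_add_left z p q
      have hy' : y = (fun v : E n => z + v) (y - z) := by simp
      rw [hy', Metric.infDist_image hiso]
      simp
    set d : ℝ := Metric.infDist (y - z) V with hddef
    have hlip : Metric.infDist (y - x) V ≤ d + dist (y - x) (y - z) :=
      Metric.infDist_le_infDist_add_dist
    have hdistxz : dist (y - x) (y - z) = dist z x := by
      rw [dist_eq_norm, dist_eq_norm]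
      congr 1
      abel
    have hd2 : β * r / 2 - ε < d := by
      rw [htrans] at hylt
      rw [hdistxz] at hlip
      linarith
    have hd0 : 0 < d := by nlinarith
    have hdnorm : d ≤ ‖y - z‖ := by
      have := Metric.infDist_le_dist_of_mem (x := y - z) h0V
      rwa [dist_zero_right] at this
    have hnorm_pos : 0 < ‖y - z‖ := lt_of_lt_of_le hd0 hdnorm
    have hnorm_le : ‖y - z‖ ≤ 3 * r / 2 := by
      have h1 : ‖y - z‖ = dist y z := (dist_eq_norm y z).symm
      have h2 : dist y z ≤ dist y x + dist x z := dist_triangle y x z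
      have h3 : dist x z = dist z x := dist_comm x z
      nlinarith
    have hsq : ‖y - z‖ ^ 2 ≤ 9 * r ^ 2 / 4 := by nlinarith
    have hsq0 : 0 < ‖y - z‖ ^ 2 := by positivity
    have hval : t < 2 * d / ‖y - z‖ ^ 2 := by
      rw [lt_div_iff₀ hsq0]
      have hprod : t * r ^ 2 ≤ T * r ^ 2 :=
        mul_le_mul_of_nonneg_right ht.le (by positivity)
      have hprod2 : t * ‖y - z‖ ^ 2 ≤ t * (9 * r ^ 2 / 4) :=
        mul_le_mul_of_nonneg_left hsq ht0
      nlinarith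
    have hfinal : c < ENNReal.ofReal (2 * d / ‖y - z‖ ^ 2) := by
      have h2 : 0 < 2 * d / ‖y - z‖ ^ 2 := by positivity
      calc c = ENNReal.ofReal t := (ENNReal.ofReal_toReal hc_top).symm
        _ < _ := (ENNReal.ofReal_lt_ofReal_iff h2).2 hval
    refine lt_of_lt_of_le hfinal ?_
    have hKle : ENNReal.ofReal
        (2 * Metric.infDist y ((fun v => z + v) '' V) / ‖y - z‖ ^ 2) ≤ Ktp H A z := by
      rw [Ktp]
      exact le_iSup₂ (f := fun w (_ : w ∈ A) => ENNReal.ofReal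
        (2 * Metric.infDist w ((fun v => z + v) '' ((H z : Submodule ℝ (E n)) : Set (E n)))
          / ‖w - z‖ ^ 2)) y hyA
    rwa [htrans'] at hKle

end
end
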